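/- Let n ≥ 1 and let m_0, …, m_n be positive reals with m_i ≥ √(m_{i-1} · m_{i+1}) for all i = 1, …, n−1. Then the negative numbers game with weights k_{ij} always terminates in at most n(n+1)/2 moves: for any starting position p ∈ ℝ^n, every sequence of positions p^(0) = p, p^(1), …, p^(N) in which each p^(t+1) is obtained from p^(t) by firing some index i with p^(t)_i < 0 satisfies N ≤ n(n+1)/2. -/

import Mathlib

open scoped RealInnerProductSpace

/-- The (unnormalized) vector `1_i / √(m i) - 1_{i-1} / √(m (i-1))`. -/
noncomputable def uvec {n : ℕ} (m : Fin (n + 1) → ℝ) (i : Fin (n + 1)) :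
    EuclideanSpace ℝ (Fin (n + 1)) :=
  EuclideanSpace.single i (Real.sqrt (m i))⁻¹ -
    EuclideanSpace.single (i - 1) (Real.sqrt (m (i - 1)))⁻¹

/-- The unit vector `α i` obtained by normalizing `1_i / √(m i) - 1_{i-1} / √(m (i-1))`. -/
noncomputable def alpha {n : ℕ} (m : Fin (n + 1) → ℝ) (i : Fin (n + 1)) :
    EuclideanSpace ℝ (Fin (n + 1)) :=
  ‖uvec m i‖⁻¹ • uvec m i

/-- The weights `k i j = -2 (α i, α j)` of the numbers game. -/
noncomputable def kwt {n : ℕ} (m : Fin (n + 1) → ℝ) (i j : Fin (n + 1)) : ℝ :=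
  -2 * ⟪alpha m i, alpha m j⟫


namespace NGAux

def fmap (i a : ℕ) : ℕ := if a = i then i + 1 else if a = i + 1 then i else a
def gmap (i b : ℕ) : ℕ := if b = i then i - 1 else if b = i - 1 then i else b

lemma fmap_inj (i : ℕ) : Function.Injective (fmap i) := by
  intro x y h; unfold fmap at h; split_ifs at h <;> omega

lemma gmap_inj (i : ℕ) : Function.Injective (gmap i) := by
  intro x y h; unfold gmap at h; split_ifs at h <;> omega

def wstep (i : ℕ) (w : ℕ × ℕ) : ℕ × ℕ := (fmap i w.1, gmap i w.2)

lemma wstep_inj (i : ℕ) : Function.Injective (wstep i) := by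
  intro x y h
  exact Prod.ext (fmap_inj i (congrArg Prod.fst h)) (gmap_inj i (congrArg Prod.snd h))

def win (idx : ℕ → ℕ) (s : ℕ) : ℕ → ℕ × ℕ
  | 0 => (idx s, idx s)
  | t + 1 => if t < s + 1 then (idx s, idx s) else wstep (idx t) (win idx s t)

open Finset in
theorem main (n N : ℕ) (K : ℕ → ℕ → ℝ) (P : ℕ → ℕ → ℝ)
    (hdiag : ∀ i, i < n → K i i = -2)
    (hzero : ∀ i j, i + 1 < j ∨ j + 1 < i ∨ n ≤ j → K i j = 0)
    (hadj : ∀ i, i + 1 < n →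
      (0 ≤ K i (i+1) ∧ K i (i+1) ≤ 1) ∧ (0 ≤ K (i+1) i ∧ K (i+1) i ≤ 1))
    (hgame : ∀ t, t < N → ∃ i, i < n ∧ P t i < 0 ∧
      ∀ j, P (t+1) j = P t j + P t i * K i j) :
    N ≤ n * (n+1) / 2 := by
  classical
  set idx : ℕ → ℕ := fun t => if h : t < N then (hgame t h).choose else 0 with hidx
  have hprop : ∀ t, t < N → idx t < n ∧ P t (idx t) < 0 ∧
      ∀ j, P (t+1) j = P t j + P t (idx t) * K (idx t) j := by
    intro t ht
    simp only [hidx, dif_pos ht]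
    exact (hgame t ht).choose_spec
  -- the key one-step lemma
  have key : ∀ t, t < N → ∀ a b : ℕ, a ≤ b → b < n →
      0 < (∑ j ∈ Icc a b, P t j) → ¬(a = idx t ∧ b = idx t) →
      fmap (idx t) a ≤ gmap (idx t) b ∧ gmap (idx t) b < n ∧
      0 < ∑ j ∈ Icc (fmap (idx t) a) (gmap (idx t) b), P (t+1) j := by
    intro t htN a b hab hbn hS hne
    obtain ⟨hi, hφ, hupd⟩ := hprop t htN
    set i := idx t with hidef
    have hK3 : ∀ j, K i j = (if i = j then (-2:ℝ) else 0) +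
        (if i + 1 = j then K i (i+1) else 0) +
        (if 1 ≤ i ∧ i - 1 = j then K i (i-1) else 0) := by
      intro j
      by_cases h1 : j = i
      · rw [h1, hdiag i hi, if_pos rfl, if_neg (by omega), if_neg (by omega)]; try ring
      · by_cases h2 : j = i + 1
        · rw [h2, if_neg (by omega), if_pos rfl, if_neg (by omega)]; try ring
        · by_cases h3 : 1 ≤ i ∧ j = i - 1
          · obtain ⟨h3a, h3b⟩ := h3
            rw [h3b, if_neg (by omega), if_neg (by omega), if_pos (by omega)]; try ring
          · rw [hzero i j (by omega), if_neg (by omega), if_neg (by omega),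
              if_neg (by omega)]; try ring
    have sumK : ∀ a b : ℕ, (∑ j ∈ Icc a b, K i j) =
        (if a ≤ i ∧ i ≤ b then (-2:ℝ) else 0) +
        (if a ≤ i + 1 ∧ i + 1 ≤ b then K i (i+1) else 0) +
        (if 1 ≤ i ∧ a ≤ i - 1 ∧ i - 1 ≤ b then K i (i-1) else 0) := by
      intro a b
      rw [Finset.sum_congr rfl (fun j _ => hK3 j)]
      rw [Finset.sum_add_distrib, Finset.sum_add_distrib]
      congr 1
      · congr 1
        · rw [Finset.sum_ite_eq]; simp [Finset.mem_Icc]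
        · rw [Finset.sum_ite_eq]; simp [Finset.mem_Icc]
      · by_cases hio : 1 ≤ i
        · simp only [hio, true_and]
          rw [Finset.sum_ite_eq]; simp [Finset.mem_Icc]
        · simp [hio]
    have trans : ∀ a b : ℕ, (∑ j ∈ Icc a b, P (t+1) j) =
        (∑ j ∈ Icc a b, P t j) + P t i * ∑ j ∈ Icc a b, K i j := by
      intro a b
      rw [Finset.mul_sum, ← Finset.sum_add_distrib]
      exact Finset.sum_congr rfl (fun j _ => hupd j)
    have hsplit : ∀ c : ℕ, i ≤ c → c < n →
        (Icc i c : Finset ℕ) = insert i (Icc (i+1) c) := by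
      intro c h1 _
      ext x; simp [Finset.mem_Icc, Finset.mem_insert]; omega
    rcases (show b + 1 < i ∨ i + 1 < a ∨ b + 1 = i ∨ a = i + 1 ∨ (a = i ∧ i < b) ∨
        (a < i ∧ b = i) ∨ (a < i ∧ i < b) from by omega) with
        hc | hc | hc | hc | hc | hc | hc
    · -- far right of window
      have hf : fmap i a = a := by unfold fmap; rw [if_neg (by omega), if_neg (by omega)]
      have hg : gmap i b = b := by unfold gmap; rw [if_neg (by omega), if_neg (by omega)]
      rw [hf, hg]
      refine ⟨hab, hbn, ?_⟩
      have hz : (∑ j ∈ Icc a b, K i j) = 0 := Finset.sum_eq_zero (fun j hj => by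
        rw [Finset.mem_Icc] at hj; exact hzero i j (by omega))
      rw [trans, hz, mul_zero, add_zero]; exact hS
    · -- far left of window
      have hf : fmap i a = a := by unfold fmap; rw [if_neg (by omega), if_neg (by omega)]
      have hg : gmap i b = b := by unfold gmap; rw [if_neg (by omega), if_neg (by omega)]
      rw [hf, hg]
      refine ⟨hab, hbn, ?_⟩
      have hz : (∑ j ∈ Icc a b, K i j) = 0 := Finset.sum_eq_zero (fun j hj => by
        rw [Finset.mem_Icc] at hj; exact hzero i j (by omega))
      rw [trans, hz, mul_zero, add_zero]; exact hS
    · -- extension to the right : b + 1 = i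
      have hf : fmap i a = a := by unfold fmap; rw [if_neg (by omega), if_neg (by omega)]
      have hg : gmap i b = i := by unfold gmap; rw [if_neg (by omega), if_pos (by omega)]
      rw [hf, hg]
      refine ⟨by omega, hi, ?_⟩
      have hsum : (∑ j ∈ Icc a i, P t j) = (∑ j ∈ Icc a b, P t j) + P t i := by
        have : i = b + 1 := by omega
        rw [this]
        exact Finset.sum_Icc_succ_top (by omega) _
      have hKm := (hadj (i-1) (by omega)).2
      have him : i - 1 + 1 = i := by omega
      rw [him] at hKm
      have hKv : (∑ j ∈ Icc a i, K i j) = K i (i-1) + -2 := by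
        rw [sumK, if_pos (by omega), if_neg (by omega), if_pos (by omega)]; try ring
      rw [trans, hsum, hKv]
      nlinarith [hKm.2, hφ, hS]
    · -- extension to the left : a = i + 1
      have hf : fmap i a = i := by unfold fmap; rw [if_neg (by omega), if_pos (by omega)]
      have hg : gmap i b = b := by unfold gmap; rw [if_neg (by omega), if_neg (by omega)]
      rw [hf, hg]
      refine ⟨by omega, hbn, ?_⟩
      have hplus : i + 1 < n := by omega
      have hsum : (∑ j ∈ Icc i b, P t j) = P t i + (∑ j ∈ Icc a b, P t j) := by
        rw [hsplit b (by omega) hbn, Finset.sum_insert (by simp [Finset.mem_Icc]), hc]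
      have hKp := (hadj i hplus).1
      have hKv : (∑ j ∈ Icc i b, K i j) = -2 + K i (i+1) := by
        rw [sumK, if_pos (by omega), if_pos (by omega), if_neg (by omega)]; try ring
      rw [trans, hsum, hKv]
      nlinarith [hKp.2, hφ, hS]
    · -- shrink from the left : a = i, i < b
      obtain ⟨hc1, hc2⟩ := hc
      have hf : fmap i a = i + 1 := by unfold fmap; rw [if_pos (by omega)]
      have hg : gmap i b = b := by unfold gmap; rw [if_neg (by omega), if_neg (by omega)]
      rw [hf, hg]
      refine ⟨by omega, hbn, ?_⟩
      have hsum : (∑ j ∈ Icc (i+1) b, P t j) = (∑ j ∈ Icc a b, P t j) - P t i := by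
        rw [hc1, hsplit b (by omega) hbn, Finset.sum_insert (by simp [Finset.mem_Icc])]
        ring
      have hKp := (hadj i (by omega)).1
      have hKv : (∑ j ∈ Icc (i+1) b, K i j) = K i (i+1) := by
        rw [sumK, if_neg (by omega), if_pos (by omega), if_neg (by omega)]; try ring
      rw [trans, hsum, hKv]
      nlinarith [hKp.2, hφ, hS]
    · -- shrink from the right : b = i, a < i
      obtain ⟨hc1, hc2⟩ := hc
      have hf : fmap i a = a := by unfold fmap; rw [if_neg (by omega), if_neg (by omega)]
      have hg : gmap i b = i - 1 := by unfold gmap; rw [if_pos (by omega)]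
      rw [hf, hg]
      refine ⟨by omega, by omega, ?_⟩
      have hsum : (∑ j ∈ Icc a (i-1), P t j) = (∑ j ∈ Icc a b, P t j) - P t i := by
        have hbi : b = (i - 1) + 1 := by omega
        have h2 : (∑ j ∈ Icc a b, P t j) = (∑ j ∈ Icc a (i-1), P t j) + P t ((i-1)+1) := by
          rw [hbi]; exact Finset.sum_Icc_succ_top (by omega) _
        rw [h2]
        have : (i - 1) + 1 = i := by omega
        rw [this]; ring
      have hKm := (hadj (i-1) (by omega)).2
      have him : i - 1 + 1 = i := by omega
      rw [him] at hKm
      have hKv : (∑ j ∈ Icc a (i-1), K i j) = K i (i-1) := by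
        rw [sumK, if_neg (by omega), if_neg (by omega), if_pos (by omega)]; try ring
      rw [trans, hsum, hKv]
      nlinarith [hKm.2, hφ, hS]
    · -- strictly inside : a < i < b
      obtain ⟨hc1, hc2⟩ := hc
      have hf : fmap i a = a := by unfold fmap; rw [if_neg (by omega), if_neg (by omega)]
      have hg : gmap i b = b := by unfold gmap; rw [if_neg (by omega), if_neg (by omega)]
      rw [hf, hg]
      refine ⟨hab, hbn, ?_⟩
      have hKp := (hadj i (by omega)).1
      have hKm := (hadj (i-1) (by omega)).2
      have him : i - 1 + 1 = i := by omega
      rw [him] at hKm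
      have hKv : (∑ j ∈ Icc a b, K i j) = -2 + K i (i+1) + K i (i-1) := by
        rw [sumK, if_pos (by omega), if_pos (by omega), if_pos (by omega)]; try ring
      rw [trans, hKv]
      nlinarith [hKp.2, hKm.2, hφ, hS]
  -- the global invariant
  have mainInv : ∀ t, t ≤ N →
      (∀ s, s < t → (win idx s t).1 ≤ (win idx s t).2 ∧ (win idx s t).2 < n ∧
        0 < ∑ j ∈ Icc (win idx s t).1 (win idx s t).2, P t j) ∧
      (∀ s s', s < s' → s' < t → win idx s t ≠ win idx s' t) := by
    intro t
    induction t with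
    | zero => intro _; exact ⟨fun s hs => absurd hs (by omega), fun s s' _ h => absurd h (by omega)⟩
    | succ t ih =>
      intro ht
      obtain ⟨ih1, ih2⟩ := ih (by omega)
      have htN : t < N := by omega
      obtain ⟨hi, hφ, _⟩ := hprop t htN
      have hnr : ∀ s, s < t → ¬((win idx s t).1 = idx t ∧ (win idx s t).2 = idx t) := by
        rintro s hs ⟨e1, e2⟩
        obtain ⟨_, _, hpos⟩ := ih1 s hs
        rw [e1, e2, Finset.Icc_self, Finset.sum_singleton] at hpos
        linarith
      have hwin : ∀ s, s < t → win idx s (t+1) = wstep (idx t) (win idx s t) := by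
        intro s hs
        show win idx s (t+1) = _
        rw [win, if_neg (by omega)]
      have hwt : win idx t (t+1) = (idx t, idx t) := by
        rw [win, if_pos (by omega)]
      constructor
      · intro s hs
        rcases (show s < t ∨ s = t from by omega) with hs' | heq
        · rw [hwin s hs']
          obtain ⟨hv1, hv2, hpos⟩ := ih1 s hs'
          exact key t htN _ _ hv1 hv2 hpos (hnr s hs')
        · rw [heq, hwt]
          obtain ⟨_, _, hupd⟩ := hprop t (by omega)
          refine ⟨le_refl _, hi, ?_⟩
          rw [Finset.Icc_self, Finset.sum_singleton, hupd, hdiag _ hi]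
          dsimp only
          linarith
      · intro s s' hss' hs'
        rcases (show s' < t ∨ s' = t from by omega) with hs'' | heq
        · rw [hwin s (by omega), hwin s' hs'']
          intro h
          exact ih2 s s' hss' hs'' (wstep_inj _ h)
        · have hst : s < t := heq ▸ hss'
          rw [heq, hwin s hst, hwt]
          intro h
          obtain ⟨hv1, hv2, _⟩ := ih1 s hst
          have h1 : fmap (idx t) (win idx s t).1 = idx t := congrArg Prod.fst h
          have h2 : gmap (idx t) (win idx s t).2 = idx t := congrArg Prod.snd h
          have hne := hnr s hst
          unfold fmap at h1; unfold gmap at h2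
          split_ifs at h1 h2 <;> omega
  -- final counting
  obtain ⟨g1, g2⟩ := mainInv N le_rfl
  set V : Finset (ℕ × ℕ) :=
    (Finset.range n).biUnion (fun b => (Finset.range (b+1)).image (fun a => (a, b))) with hV
  have hmem : ∀ s, s < N → win idx s N ∈ V := by
    intro s hs
    obtain ⟨hv1, hv2, _⟩ := g1 s hs
    rw [hV]
    rw [Finset.mem_biUnion]
    refine ⟨(win idx s N).2, Finset.mem_range.mpr hv2, ?_⟩
    rw [Finset.mem_image]
    exact ⟨(win idx s N).1, Finset.mem_range.mpr (by omega), rfl⟩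
  have hsub : (Finset.range N).image (fun s => win idx s N) ⊆ V := by
    intro w hw
    rw [Finset.mem_image] at hw
    obtain ⟨s, hs, rfl⟩ := hw
    exact hmem s (Finset.mem_range.mp hs)
  have hinj : Set.InjOn (fun s => win idx s N) (Finset.range N) := by
    intro x hx y hy hxy
    simp only [Finset.coe_range, Set.mem_Iio] at hx hy
    by_contra hne
    rcases (show x < y ∨ y < x from by omega) with h | h
    · exact g2 x y h hy hxy
    · exact g2 y x h hx hxy.symm
  have hcard : N ≤ V.card := by
    calc N = (Finset.range N).card := (Finset.card_range N).symm
      _ = ((Finset.range N).image (fun s => win idx s N)).card :=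
        (Finset.card_image_of_injOn hinj).symm
      _ ≤ V.card := Finset.card_le_card hsub
  have hVcard : V.card * 2 = n * (n + 1) := by
    have hd : V.card = ∑ b ∈ Finset.range n, (b + 1) := by
      rw [hV, Finset.card_biUnion]
      · exact Finset.sum_congr rfl (fun b _ => by
          rw [Finset.card_image_of_injective _ (fun x y h => (Prod.mk.injEq _ _ _ _).mp h |>.1),
            Finset.card_range])
      · intro x hx y hy hxy
        simp only [Finset.disjoint_left, Finset.mem_image]
        rintro w ⟨a, _, rfl⟩ ⟨a', _, he⟩
        exact hxy ((Prod.mk.injEq _ _ _ _).mp he |>.2.symm ▸ rfl)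
    have hsum : (∑ b ∈ Finset.range n, (b + 1)) = ∑ j ∈ Finset.range (n+1), j := by
      rw [Finset.sum_range_succ' (fun j => j) n]
      omega
    have h2 := Finset.sum_range_id_mul_two (n + 1)
    rw [hd, hsum, h2, Nat.mul_comm]
    simp
  omega

end NGAux


namespace NGAux2

lemma succ_sub_one {n : ℕ} (i : Fin n) : (i.succ : Fin (n + 1)) - 1 = i.castSucc := by
  have hn : 0 < n := i.pos
  apply Fin.ext
  rw [Fin.sub_def]
  simp only [Fin.val_one', Nat.mod_eq_of_lt (show 1 < n+1 by omega), Fin.val_succ,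
    Fin.coe_castSucc]
  have h2 : n + 1 - 1 + ((i:ℕ) + 1) = (n + 1) + (i:ℕ) := by omega
  rw [h2, Nat.add_mod_left, Nat.mod_eq_of_lt (by omega)]

lemma inner_single_single {n : ℕ} (a b : Fin (n+1)) (x y : ℝ) :
    ⟪(EuclideanSpace.single a x : EuclideanSpace ℝ (Fin (n+1))), EuclideanSpace.single b y⟫ =
      if a = b then x * y else 0 := by
  rw [EuclideanSpace.inner_single_left, EuclideanSpace.single_apply]
  simp [mul_ite, eq_comm]

lemma inner_uvec {n : ℕ} (m : Fin (n + 1) → ℝ) (a b : Fin (n+1)) :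
    ⟪uvec m a, uvec m b⟫ =
      (if a = b then (Real.sqrt (m a))⁻¹ * (Real.sqrt (m b))⁻¹ else 0)
      - (if a = b - 1 then (Real.sqrt (m a))⁻¹ * (Real.sqrt (m (b-1)))⁻¹ else 0)
      - (if a - 1 = b then (Real.sqrt (m (a-1)))⁻¹ * (Real.sqrt (m b))⁻¹ else 0)
      + (if a - 1 = b - 1 then (Real.sqrt (m (a-1)))⁻¹ * (Real.sqrt (m (b-1)))⁻¹ else 0) := by
  rw [uvec, uvec, inner_sub_left, inner_sub_right, inner_sub_right,
    inner_single_single, inner_single_single, inner_single_single, inner_single_single]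
  ring

end NGAux2

namespace NGAux2

lemma sqrt_inv_mul_self {x : ℝ} (hx : 0 < x) :
    (Real.sqrt x)⁻¹ * (Real.sqrt x)⁻¹ = x⁻¹ := by
  rw [← mul_inv, Real.mul_self_sqrt hx.le]

variable {n : ℕ} (m : Fin (n + 1) → ℝ)

lemma inner_uvec_self (hm : ∀ i, 0 < m i) (i : Fin n) :
    ⟪uvec m i.succ, uvec m i.succ⟫ = (m i.succ)⁻¹ + (m i.castSucc)⁻¹ := by
  rw [inner_uvec, succ_sub_one]
  rw [if_pos rfl, if_pos rfl]
  rw [if_neg (by simp only [Fin.ext_iff, Fin.val_succ, Fin.coe_castSucc]; omega),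
    if_neg (by simp only [Fin.ext_iff, Fin.val_succ, Fin.coe_castSucc]; omega)]
  rw [sqrt_inv_mul_self (hm _), sqrt_inv_mul_self (hm _)]
  ring

lemma inner_uvec_adj (hm : ∀ i, 0 < m i) (i j : Fin n) (hj : (j : ℕ) = (i : ℕ) + 1) :
    ⟪uvec m i.succ, uvec m j.succ⟫ = -(m i.succ)⁻¹ := by
  have hcs : (j.succ : Fin (n+1)) - 1 = i.succ := by
    rw [succ_sub_one]; exact Fin.ext (by simp [hj])
  rw [inner_uvec, hcs, succ_sub_one]
  rw [if_pos rfl]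
  rw [if_neg (by simp only [Fin.ext_iff, Fin.val_succ]; omega),
    if_neg (by simp only [Fin.ext_iff, Fin.val_succ, Fin.coe_castSucc]; omega),
    if_neg (by simp only [Fin.ext_iff, Fin.val_succ, Fin.coe_castSucc]; omega)]
  rw [sqrt_inv_mul_self (hm _)]
  ring

lemma inner_uvec_far (i j : Fin n) (hij : (i:ℕ) + 1 < j ∨ (j:ℕ) + 1 < i) :
    ⟪uvec m i.succ, uvec m j.succ⟫ = 0 := by
  rw [inner_uvec, succ_sub_one, succ_sub_one]
  rw [if_neg (by simp only [Fin.ext_iff, Fin.val_succ]; omega),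
    if_neg (by simp only [Fin.ext_iff, Fin.val_succ, Fin.coe_castSucc]; omega),
    if_neg (by simp only [Fin.ext_iff, Fin.val_succ, Fin.coe_castSucc]; omega),
    if_neg (by simp only [Fin.ext_iff, Fin.coe_castSucc]; omega)]
  ring

lemma norm_uvec_sq (hm : ∀ i, 0 < m i) (i : Fin n) :
    ‖uvec m i.succ‖ ^ 2 = (m i.succ)⁻¹ + (m i.castSucc)⁻¹ := by
  rw [← real_inner_self_eq_norm_sq]
  exact inner_uvec_self m hm i

lemma norm_uvec_pos (hm : ∀ i, 0 < m i) (i : Fin n) : 0 < ‖uvec m i.succ‖ := by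
  have h1 : (0:ℝ) < (m i.succ)⁻¹ + (m i.castSucc)⁻¹ := by
    have := hm i.succ; have := hm i.castSucc; positivity
  rw [← norm_uvec_sq m hm i] at h1
  nlinarith [norm_nonneg (uvec m i.succ)]

lemma inner_alpha (a b : Fin (n+1)) :
    ⟪alpha m a, alpha m b⟫ = ‖uvec m a‖⁻¹ * (‖uvec m b‖⁻¹ * ⟪uvec m a, uvec m b⟫) := by
  rw [alpha, alpha, real_inner_smul_left, real_inner_smul_right]

end NGAux2

namespace NGAux2

variable {n : ℕ} (m : Fin (n + 1) → ℝ)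

lemma kwt_symm (a b : Fin (n+1)) : kwt m a b = kwt m b a := by
  rw [kwt, kwt, real_inner_comm]

lemma kwt_diag (hm : ∀ i, 0 < m i) (i : Fin n) : kwt m i.succ i.succ = -2 := by
  have hN := norm_uvec_pos m hm i
  rw [kwt, inner_alpha, real_inner_self_eq_norm_sq]
  field_simp

lemma kwt_far (i j : Fin n) (hij : (i:ℕ) + 1 < j ∨ (j:ℕ) + 1 < i) :
    kwt m i.succ j.succ = 0 := by
  rw [kwt, inner_alpha, inner_uvec_far m i j hij]
  ring

lemma kwt_adj (hm : ∀ i, 0 < m i)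
    (hmass : ∀ i : Fin (n + 1), 1 ≤ (i : ℕ) → (i : ℕ) ≤ n - 1 →
      Real.sqrt (m (i - 1) * m (i + 1)) ≤ m i)
    (i j : Fin n) (hj : (j : ℕ) = (i : ℕ) + 1) :
    0 ≤ kwt m i.succ j.succ ∧ kwt m i.succ j.succ ≤ 1 := by
  have hNi := norm_uvec_pos m hm i
  have hNj := norm_uvec_pos m hm j
  set Ni := ‖uvec m i.succ‖
  set Nj := ‖uvec m j.succ‖
  set A := m i.castSucc with hA'
  set B := m i.succ with hB'
  set C := m j.succ with hC'
  have hA : 0 < A := hm _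
  have hB : 0 < B := hm _
  have hC : 0 < C := hm _
  have hval : kwt m i.succ j.succ = 2 * (Ni⁻¹ * (Nj⁻¹ * B⁻¹)) := by
    rw [kwt, inner_alpha, inner_uvec_adj m hm i j hj]
    ring
  have hNi2 : Ni ^ 2 = B⁻¹ + A⁻¹ := norm_uvec_sq m hm i
  have hNj2 : Nj ^ 2 = C⁻¹ + B⁻¹ := by
    have hcs : (j.castSucc : Fin (n+1)) = i.succ := Fin.ext (by simp [hj])
    have := norm_uvec_sq m hm j
    rw [hcs] at this
    exact this
  constructor
  · rw [hval]; positivity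
  · -- the mass inequality
    have hle : (i.succ : ℕ) ≤ n - 1 := by
      have h1 : (i.succ : ℕ) = (i : ℕ) + 1 := rfl
      have := j.isLt
      omega
    have hmq := hmass i.succ (by simp) hle
    have hplus : (i.succ : Fin (n+1)) + 1 = j.succ := by
      apply Fin.ext
      have hjn := j.isLt
      have hsv : ((i.succ : Fin (n+1)) : ℕ) = (i : ℕ) + 1 := rfl
      rw [Fin.val_add, Fin.val_one', Nat.mod_eq_of_lt (show 1 < n + 1 by omega),
        Nat.mod_eq_of_lt (show ((i.succ : Fin (n+1)) : ℕ) + 1 < n + 1 by omega)]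
      simp only [Fin.val_succ]
      omega
    rw [succ_sub_one, hplus] at hmq
    have hB2 : A * C ≤ B ^ 2 := by
      have h1 : A * C = Real.sqrt (A * C) ^ 2 := (Real.sq_sqrt (by positivity)).symm
      rw [h1]
      exact pow_le_pow_left₀ (Real.sqrt_nonneg _) hmq 2
    have key1 : 4 * (A * C) ≤ (A + B) * (B + C) := by
      nlinarith [sq_nonneg (A*B - B*C), mul_pos hA hC, mul_pos hA hB, mul_pos hB hC,
        mul_pos (mul_pos hA hB) hC]
    have key15 : 4 * (B⁻¹ * B⁻¹) ≤ (B⁻¹ + A⁻¹) * (C⁻¹ + B⁻¹) := by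
      have h0 : (B⁻¹ + A⁻¹) * (C⁻¹ + B⁻¹) - 4 * (B⁻¹ * B⁻¹) =
          ((A + B) * (B + C) - 4 * (A * C)) / (A * B ^ 2 * C) := by
        field_simp
      have h1 : 0 ≤ ((A + B) * (B + C) - 4 * (A * C)) / (A * B ^ 2 * C) :=
        div_nonneg (by linarith [key1]) (by positivity)
      rw [← h0] at h1
      linarith
    have key2 : 2 * B⁻¹ ≤ Ni * Nj := by
      have hsq : (2 * B⁻¹) ^ 2 ≤ (Ni * Nj) ^ 2 := by
        rw [mul_pow, mul_pow, hNi2, hNj2]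
        have hBi : (0:ℝ) < B⁻¹ := by positivity
        nlinarith [key15]
      nlinarith [mul_pos hNi hNj, inv_pos.mpr hB]
    rw [hval]
    have heq : 2 * (Ni⁻¹ * (Nj⁻¹ * B⁻¹)) = (2 * B⁻¹) / (Ni * Nj) := by
      rw [div_eq_mul_inv, mul_inv]
      ring
    rw [heq, div_le_one (by positivity)]
    exact key2

end NGAux2

/-- If every interior mass is at least the geometric mean of the masses of its
immediate neighbors, then every negative play of the numbers game with weights
`k i j = -2 (α i, α j)` terminates in at most `n (n + 1) / 2` moves.
A position is `p : Fin n → ℝ` (components `p 1, …, p n` of the paper);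
firing index `i` (with `p i < 0`) adds `p i * k i j` to each component `p j`. -/
theorem numbers_game_terminates
    (n : ℕ) (hn : 1 ≤ n) (m : Fin (n + 1) → ℝ)
    (hm : ∀ i, 0 < m i)
    (hmass : ∀ i : Fin (n + 1), 1 ≤ (i : ℕ) → (i : ℕ) ≤ n - 1 →
      Real.sqrt (m (i - 1) * m (i + 1)) ≤ m i)
    (N : ℕ) (p : ℕ → Fin n → ℝ)
    (hstep : ∀ t < N, ∃ i : Fin n, p t i < 0 ∧
      p (t + 1) = fun j => p t j + p t i * kwt m i.succ j.succ) :
    N ≤ n * (n + 1) / 2 := by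
  classical
  apply NGAux.main n N
    (fun i j => if h : i < n ∧ j < n then
      kwt m (⟨i, h.1⟩ : Fin n).succ (⟨j, h.2⟩ : Fin n).succ else 0)
    (fun t j => if h : j < n then p t ⟨j, h⟩ else 0)
  · -- diagonal
    intro i hi
    rw [dif_pos ⟨hi, hi⟩]
    exact NGAux2.kwt_diag m hm ⟨i, hi⟩
  · -- vanishing off the tridiagonal
    intro i j hcase
    by_cases h : i < n ∧ j < n
    · rw [dif_pos h]
      refine NGAux2.kwt_far m ⟨i, h.1⟩ ⟨j, h.2⟩ ?_
      rcases hcase with h1 | h1 | h1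
      · exact Or.inl h1
      · exact Or.inr h1
      · omega
    · rw [dif_neg h]
  · -- adjacent weights lie in [0, 1]
    intro i hi1
    have hi : i < n := by omega
    have hb := NGAux2.kwt_adj m hm hmass ⟨i, hi⟩ ⟨i + 1, hi1⟩ rfl
    have hb2 := NGAux2.kwt_symm m (⟨i, hi⟩ : Fin n).succ (⟨i + 1, hi1⟩ : Fin n).succ
    rw [dif_pos ⟨hi, hi1⟩, dif_pos ⟨hi1, hi⟩]
    exact ⟨hb, by rw [← hb2]; exact hb⟩
  · -- the game dynamics
    intro t ht
    obtain ⟨i, hneg, hupd⟩ := hstep t ht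
    refine ⟨i.val, i.isLt, ?_, ?_⟩
    · rw [dif_pos i.isLt]
      simpa using hneg
    · intro j
      by_cases hj : j < n
      · rw [dif_pos hj, dif_pos hj, dif_pos i.isLt, dif_pos ⟨i.isLt, hj⟩, hupd]
      · rw [dif_neg hj, dif_neg hj, dif_neg (by omega : ¬(i.val < n ∧ j < n))]
        ring
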